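/- arXiv:2505.07056 — 2 statements merged into one kernel-verified Lean document; each statement's English description precedes it below -/
import Mathlib

section
/- Let X be a proper metric space, Γ a group acting on X by isometries with properly discontinuous action, o ∈ X a basepoint, and F := {x ∈ X : d(x,o) ≤ d(γ·x,o) for all γ ∈ Γ} the associated Dirichlet domain. Then F is locally finite: for every compact set K ⊆ X, the set {γ ∈ Γ : (γ·K) ∩ F ≠ ∅} is finite. -/
open Pointwise

/-- The Dirichlet domain of a properly discontinuous isometric group action on a proper
metric space is locally finite: every compact set meets only finitely many translates. -/
theorem dirichlet_domain_locally_finite {X : Type*} [MetricSpace X] [ProperSpace X]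
    {Γ : Type*} [Group Γ] [MulAction Γ X]
    (hiso : ∀ (γ : Γ) (x y : X), dist (γ • x) (γ • y) = dist x y)
    (hdisc : ∀ K L : Set X, IsCompact K → IsCompact L →
      {γ : Γ | (γ • K) ∩ L ≠ ∅}.Finite)
    (o : X) (K : Set X) (hK : IsCompact K) :
    {γ : Γ | (γ • K) ∩ {x : X | ∀ γ : Γ, dist x o ≤ dist (γ • x) o} ≠ ∅}.Finite := by
  obtain ⟨R, hR⟩ := hK.isBounded.subset_closedBall o
  apply (hdisc K (Metric.closedBall o R) hK (isCompact_closedBall o R)).subset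
  intro γ hγ
  obtain ⟨x, hxK, hxF⟩ := Set.nonempty_iff_ne_empty.mpr hγ
  obtain ⟨k, hk, rfl⟩ := hxK
  refine Set.nonempty_iff_ne_empty.mp ⟨γ • k, ⟨k, hk, rfl⟩, ?_⟩
  have h1 : dist (γ • k) o ≤ dist (γ⁻¹ • γ • k) o := hxF γ⁻¹
  rw [inv_smul_smul] at h1
  exact Metric.mem_closedBall.mpr (h1.trans (hR hk))
end

section
/- Let X be a proper metric space, Γ a group acting on X by isometries with properly discontinuous action, o ∈ X a basepoint, and F := {x ∈ X : d(x,o) ≤ d(γ·x,o) for all γ ∈ Γ} the associated Dirichlet domain. Then for every compact set K ⊆ F and every R > 0, there exist a compact set K' ⊆ F and a finite subset S ⊆ Γ (depending on K and R) such that whenever x, y ∈ X satisfy x ∈ F, y ∈ ⋃_{γ ∈ Γ} γ·K, and d(x,y) ≤ R, one has x ∈ K' and y ∈ ⋃_{γ ∈ S} γ·K. -/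
open Pointwise

/-- Points of the Dirichlet domain `F` that are within distance `R` of the orbit of a
compact subset `K ⊆ F` stay in a compact subset `K' ⊆ F`, and only finitely many
translates of `K` are involved. -/
theorem dirichlet_domain_uniform_local_finiteness {X : Type*} [MetricSpace X] [ProperSpace X]
    {Γ : Type*} [Group Γ] [MulAction Γ X]
    (hiso : ∀ (γ : Γ) (x y : X), dist (γ • x) (γ • y) = dist x y)
    (hdisc : ∀ K L : Set X, IsCompact K → IsCompact L →
      {γ : Γ | (γ • K) ∩ L ≠ ∅}.Finite)
    (o : X) (K : Set X) (hK : IsCompact K)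
    (hKF : K ⊆ {x : X | ∀ γ : Γ, dist x o ≤ dist (γ • x) o})
    (R : ℝ) (hR : 0 < R) :
    ∃ K' : Set X, ∃ S : Finset Γ,
      IsCompact K' ∧ K' ⊆ {x : X | ∀ γ : Γ, dist x o ≤ dist (γ • x) o} ∧
      ∀ x y : X, x ∈ {x : X | ∀ γ : Γ, dist x o ≤ dist (γ • x) o} →
        y ∈ ⋃ γ : Γ, γ • K → dist x y ≤ R →
        x ∈ K' ∧ y ∈ ⋃ γ ∈ S, γ • K := by
  set F : Set X := {x : X | ∀ γ : Γ, dist x o ≤ dist (γ • x) o} with hF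
  obtain ⟨r, hr⟩ := hK.isBounded.subset_closedBall o
  -- F is closed
  have hcont : ∀ γ : Γ, Continuous fun x : X => γ • x := fun γ =>
    (Isometry.of_dist_eq (hiso γ)).continuous
  have hFclosed : IsClosed F := by
    have : F = ⋂ γ : Γ, {x : X | dist x o ≤ dist (γ • x) o} := by
      ext x; simp [hF, Set.mem_iInter]
    rw [this]
    exact isClosed_iInter fun γ =>
      isClosed_le (continuous_id.dist continuous_const)
        (((hcont γ).dist continuous_const))
  have hL : IsCompact (Metric.closedBall o (2 * R + r)) := isCompact_closedBall o _
  refine ⟨F ∩ Metric.closedBall o (R + r), (hdisc K _ hK hL).toFinset, ?_, Set.inter_subset_left, ?_⟩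
  · exact (isCompact_closedBall o (R + r)).of_isClosed_subset
      (hFclosed.inter Metric.isClosed_closedBall) Set.inter_subset_right
  intro x y hx hy hdxy
  obtain ⟨γ, k, hk, rfl⟩ : ∃ γ : Γ, ∃ k ∈ K, γ • k = y := by
    simpa [Set.mem_iUnion, Set.mem_smul_set] using hy
  have hkr : dist k o ≤ r := hr hk
  have hd1 : dist (γ⁻¹ • x) k = dist x (γ • k) := by
    rw [← hiso γ (γ⁻¹ • x) k, smul_inv_smul]
  have hxo : dist x o ≤ R + r := by
    have h1 : dist x o ≤ dist (γ⁻¹ • x) o := hx γ⁻¹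
    have h2 : dist (γ⁻¹ • x) o ≤ dist (γ⁻¹ • x) k + dist k o := dist_triangle _ _ _
    rw [hd1] at h2
    linarith [hdxy, hkr]
  have hyo : dist (γ • k) o ≤ 2 * R + r := by
    have := dist_triangle (γ • k) x o
    rw [dist_comm (γ • k) x] at this
    linarith
  constructor
  · exact ⟨hx, Metric.mem_closedBall.2 hxo⟩
  · have hγ : γ ∈ {γ : Γ | (γ • K) ∩ Metric.closedBall o (2 * R + r) ≠ ∅} := by
      refine Set.nonempty_iff_ne_empty.1 ⟨γ • k, ⟨k, hk, rfl⟩, Metric.mem_closedBall.2 hyo⟩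
    refine Set.mem_biUnion ?_ ⟨k, hk, rfl⟩
    exact (Set.Finite.mem_toFinset _).2 hγ
end
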